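/- If X = X₁ + X₂ with independent X₁, X₂ whose densities have Fisher information at most I, then the density p of X satisfies: p(x) = 0 implies p''(x) = 0; |p''(x)| ≤ I^{3/2} for all x; and ∫_{p>0} p''(x)²/p(x) dx ≤ I². -/

import Mathlib

open MeasureTheory Real

open scoped ENNReal



lemma myCS {μ : Measure ℝ} {u v : ℝ → ℝ} (hu : ∀ x, 0 ≤ u x) (hv : ∀ x, 0 ≤ v x)
    (hum : AEStronglyMeasurable u μ) (hvm : AEStronglyMeasurable v μ)
    (hu2 : Integrable (fun x => u x ^ 2) μ) (hv2 : Integrable (fun x => v x ^ 2) μ) :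
    ∫ x, u x * v x ∂μ ≤ Real.sqrt (∫ x, u x ^ 2 ∂μ) * Real.sqrt (∫ x, v x ^ 2 ∂μ) := by
  have hpq : Real.HolderConjugate 2 2 := by constructor <;> norm_num
  have h2 : ENNReal.ofReal (2 : ℝ) = 2 := by norm_num
  have hmu : MemLp u (ENNReal.ofReal (2:ℝ)) μ := by
    rw [h2]; exact (memLp_two_iff_integrable_sq hum).2 hu2
  have hmv : MemLp v (ENNReal.ofReal (2:ℝ)) μ := by
    rw [h2]; exact (memLp_two_iff_integrable_sq hvm).2 hv2
  have := integral_mul_le_Lp_mul_Lq_of_nonneg hpq (Filter.Eventually.of_forall hu)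
    (Filter.Eventually.of_forall hv) hmu hmv
  calc ∫ x, u x * v x ∂μ ≤ (∫ x, u x ^ (2:ℝ) ∂μ) ^ ((1:ℝ)/2) * (∫ x, v x ^ (2:ℝ) ∂μ) ^ ((1:ℝ)/2) := this
    _ = Real.sqrt (∫ x, u x ^ 2 ∂μ) * Real.sqrt (∫ x, v x ^ 2 ∂μ) := by
        rw [Real.sqrt_eq_rpow, Real.sqrt_eq_rpow]
        norm_num [Real.rpow_natCast]

lemma fisher_aux (p p' : ℝ → ℝ) (I : ℝ)
    (hnn : ∀ x, 0 ≤ p x) (hint : Integrable p) (h1 : ∫ x, p x = 1)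
    (hFTC : ∀ a b : ℝ, p b - p a = ∫ x in a..b, p' x)
    (hconv : ∀ x, p x = 0 → p' x = 0)
    (hfin : IntegrableOn (fun x => p' x ^ 2 / p x) {x | 0 < p x})
    (hI : ∫ x in {x | 0 < p x}, p' x ^ 2 / p x ≤ I) :
    Integrable (fun x => p' x ^ 2 / p x) ∧
    (∫ x, p' x ^ 2 / p x) ≤ I ∧
    (∀ x, (p' x ^ 2 / p x) * p x = p' x ^ 2) ∧
    (∀ x, p x ≤ Real.sqrt I) := by
  set q : ℝ → ℝ := fun x => p' x ^ 2 / p x with hq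
  have hqnn : ∀ x, 0 ≤ q x := fun x => div_nonneg (sq_nonneg _) (hnn x)
  have hq0 : ∀ x, p x = 0 → q x = 0 := by
    intro x hx; simp [hq, hconv x hx]
  have hqp : ∀ x, q x * p x = p' x ^ 2 := by
    intro x
    rcases (hnn x).eq_or_lt with h | h
    · rw [← h, mul_zero, hconv x h.symm]; ring
    · exact div_mul_cancel₀ _ h.ne'
  -- measurable version of the support
  obtain ⟨P, hPm, hP⟩ := hint.aestronglyMeasurable
  set T : Set ℝ := {x | 0 < P x} with hT
  have hTm : MeasurableSet T := measurableSet_lt measurable_const hPm.measurable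
  have hST : {x | 0 < p x} =ᵐ[volume] T := by
    filter_upwards [hP] with x hx
    show ((0 < p x) = (0 < P x))
    rw [hx]
  have hrestr : volume.restrict {x | 0 < p x} = volume.restrict T :=
    Measure.restrict_congr_set hST
  have hfinT : IntegrableOn q T := by rw [IntegrableOn, ← hrestr]; exact hfin
  have hqind : q =ᵐ[volume] T.indicator q := by
    filter_upwards [hP] with x hx
    by_cases hxT : x ∈ T
    · rw [Set.indicator_of_mem hxT]
    · rw [Set.indicator_of_notMem hxT]
      have : p x = 0 := le_antisymm (hx ▸ not_lt.1 hxT) (hnn x)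
      exact hq0 x this
  have hqint : Integrable q := ((integrable_indicator_iff hTm).2 hfinT).congr hqind.symm
  have hqI : ∫ x, q x ≤ I := by
    rw [integral_congr_ae hqind, integral_indicator hTm]
    calc ∫ x in T, q x = ∫ x in {x | 0 < p x}, q x := by rw [hrestr]
      _ ≤ I := hI
  refine ⟨hqint, hqI, hqp, ?_⟩
  have hI0 : 0 ≤ I := le_trans (integral_nonneg fun x => hqnn x) hI
  -- |p'| = √(q x) * √(p x)
  have habs : ∀ x, |p' x| = Real.sqrt (q x) * Real.sqrt (p x) := by
    intro x
    rw [← Real.sqrt_mul (hqnn x), hqp x, Real.sqrt_sq_eq_abs]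
  have hsm : AEStronglyMeasurable (fun x => |p' x|) volume := by
    have : AEStronglyMeasurable (fun x => Real.sqrt (q x) * Real.sqrt (p x)) volume :=
      ((Real.continuous_sqrt.comp_aestronglyMeasurable hqint.aestronglyMeasurable).mul
        (Real.continuous_sqrt.comp_aestronglyMeasurable hint.aestronglyMeasurable))
    exact this.congr (Filter.Eventually.of_forall fun x => (habs x).symm)
  have habsint : Integrable (fun x => |p' x|) := by
    refine Integrable.mono' ((hqint.add hint).div_const 2) hsm
      (Filter.Eventually.of_forall fun x => ?_)
    rw [Real.norm_eq_abs, abs_abs, habs x]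
    have h1 : Real.sqrt (q x) * Real.sqrt (p x) ≤ ((Real.sqrt (q x))^2 + (Real.sqrt (p x))^2)/2 := by
      nlinarith [sq_nonneg (Real.sqrt (q x) - Real.sqrt (p x))]
    calc Real.sqrt (q x) * Real.sqrt (p x)
        ≤ ((Real.sqrt (q x))^2 + (Real.sqrt (p x))^2)/2 := h1
      _ = (q x + p x)/2 := by rw [Real.sq_sqrt (hqnn x), Real.sq_sqrt (hnn x)]
  have habsI : ∫ x, |p' x| ≤ Real.sqrt I := by
    have hu2 : Integrable (fun x => (Real.sqrt (q x))^2) :=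
      hqint.congr (Filter.Eventually.of_forall fun x => (Real.sq_sqrt (hqnn x)).symm)
    have hv2 : Integrable (fun x => (Real.sqrt (p x))^2) :=
      hint.congr (Filter.Eventually.of_forall fun x => (Real.sq_sqrt (hnn x)).symm)
    calc ∫ x, |p' x| = ∫ x, Real.sqrt (q x) * Real.sqrt (p x) := integral_congr_ae
          (Filter.Eventually.of_forall habs)
      _ ≤ Real.sqrt (∫ x, (Real.sqrt (q x))^2) * Real.sqrt (∫ x, (Real.sqrt (p x))^2) :=
          myCS (fun x => Real.sqrt_nonneg _) (fun x => Real.sqrt_nonneg _)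
            (Real.continuous_sqrt.comp_aestronglyMeasurable hqint.aestronglyMeasurable)
            (Real.continuous_sqrt.comp_aestronglyMeasurable hint.aestronglyMeasurable) hu2 hv2
      _ = Real.sqrt (∫ x, q x) * Real.sqrt (∫ x, p x) := by
          rw [integral_congr_ae (Filter.Eventually.of_forall fun x => Real.sq_sqrt (hqnn x)),
            integral_congr_ae (Filter.Eventually.of_forall fun x => Real.sq_sqrt (hnn x))]
      _ ≤ Real.sqrt I * 1 := by
          rw [h1, Real.sqrt_one]
          exact mul_le_mul_of_nonneg_right (Real.sqrt_le_sqrt hqI) zero_le_one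
      _ = Real.sqrt I := mul_one _
  -- now the sup bound
  intro x
  refine le_of_forall_pos_le_add fun ε hε => ?_
  -- find a < x with p a < ε
  have hex : ∃ a, a < x ∧ p a < ε := by
    by_contra hcon
    push_neg at hcon
    have hconst : Integrable (fun _ : ℝ => ε) (volume.restrict (Set.Iio x)) := by
      refine Integrable.mono' hint.integrableOn aestronglyMeasurable_const ?_
      rw [ae_restrict_iff' measurableSet_Iio]
      exact Filter.Eventually.of_forall fun a ha => by
        rw [Real.norm_eq_abs, abs_of_pos hε]; exact hcon a ha
    rw [integrable_const_iff] at hconst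
    rcases hconst with h | h
    · exact hε.ne' h
    · replace h := h.measure_univ_lt_top
      rw [Measure.restrict_apply_univ, Real.volume_Iio] at h
      exact (lt_irrefl _ h).elim
  obtain ⟨a, hax, hpa⟩ := hex
  have hFTCx := hFTC a x
  have hbound : p x - p a ≤ Real.sqrt I := by
    rw [hFTCx, intervalIntegral.integral_of_le hax.le]
    calc ∫ t in Set.Ioc a x, p' t ≤ |∫ t in Set.Ioc a x, p' t| := le_abs_self _
      _ ≤ ∫ t in Set.Ioc a x, |p' t| := by
          simpa [Real.norm_eq_abs] using
            norm_integral_le_integral_norm (μ := volume.restrict (Set.Ioc a x)) p'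
      _ ≤ ∫ t, |p' t| := setIntegral_le_integral habsint
          (Filter.Eventually.of_forall fun t => abs_nonneg _)
      _ ≤ Real.sqrt I := habsI
  linarith

lemma abs_conv_le (h c d : ℝ → ℝ)
    (hcnn : ∀ y, 0 ≤ c y) (hdnn : ∀ y, 0 ≤ d y)
    (hsq : ∀ y, h y ^ 2 = c y * d y)
    (hcint : Integrable c) (hdint : Integrable d) :
    |∫ y, h y| ≤ Real.sqrt (∫ y, c y) * Real.sqrt (∫ y, d y) := by
  have habs : ∀ y, |h y| = Real.sqrt (c y) * Real.sqrt (d y) := by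
    intro y
    rw [← Real.sqrt_mul (hcnn y), ← hsq y, Real.sqrt_sq_eq_abs]
  have hu2 : Integrable (fun y => Real.sqrt (c y) ^ 2) :=
    hcint.congr (Filter.Eventually.of_forall fun y => (Real.sq_sqrt (hcnn y)).symm)
  have hv2 : Integrable (fun y => Real.sqrt (d y) ^ 2) :=
    hdint.congr (Filter.Eventually.of_forall fun y => (Real.sq_sqrt (hdnn y)).symm)
  calc |∫ y, h y| ≤ ∫ y, |h y| := by
        simpa [Real.norm_eq_abs] using norm_integral_le_integral_norm (μ := (volume : Measure ℝ)) h
    _ = ∫ y, Real.sqrt (c y) * Real.sqrt (d y) :=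
        integral_congr_ae (Filter.Eventually.of_forall habs)
    _ ≤ Real.sqrt (∫ y, Real.sqrt (c y) ^ 2) * Real.sqrt (∫ y, Real.sqrt (d y) ^ 2) :=
        myCS (fun y => Real.sqrt_nonneg _) (fun y => Real.sqrt_nonneg _)
          (Real.continuous_sqrt.comp_aestronglyMeasurable hcint.aestronglyMeasurable)
          (Real.continuous_sqrt.comp_aestronglyMeasurable hdint.aestronglyMeasurable) hu2 hv2
    _ = Real.sqrt (∫ y, c y) * Real.sqrt (∫ y, d y) := by
        rw [integral_congr_ae (Filter.Eventually.of_forall fun y => Real.sq_sqrt (hcnn y)),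
          integral_congr_ae (Filter.Eventually.of_forall fun y => Real.sq_sqrt (hdnn y))]

lemma lintegral_conv_le (f g : ℝ → ℝ) (I : ℝ) (hI0 : 0 ≤ I)
    (hfnn : ∀ u, 0 ≤ f u) (hgnn : ∀ u, 0 ≤ g u)
    (hfint : Integrable f) (hgint : Integrable g)
    (hfI : ∫ u, f u ≤ I) (hgI : ∫ u, g u ≤ I) :
    ∫⁻ x, ∫⁻ y, ENNReal.ofReal (f (x - y)) * ENNReal.ofReal (g y) ≤ ENNReal.ofReal (I ^ 2) := by
  have haemf : AEMeasurable (fun u => ENNReal.ofReal (f u)) (volume : Measure ℝ) :=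
    hfint.aemeasurable.ennreal_ofReal
  have haemg : AEMeasurable (fun u => ENNReal.ofReal (g u)) (volume : Measure ℝ) :=
    hgint.aemeasurable.ennreal_ofReal
  have hprod : AEMeasurable (fun z : ℝ × ℝ =>
      ENNReal.ofReal (f (z.1 - z.2)) * ENNReal.ofReal (g z.2))
      ((volume : Measure ℝ).prod volume) := by
    have h1 : AEMeasurable (fun w : ℝ × ℝ => ENNReal.ofReal (f w.1) * ENNReal.ofReal (g w.2))
        ((volume : Measure ℝ).prod volume) :=
      (haemf.comp_quasiMeasurePreserving Measure.quasiMeasurePreserving_fst).mul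
        (haemg.comp_quasiMeasurePreserving Measure.quasiMeasurePreserving_snd)
    have h2 := h1.comp_quasiMeasurePreserving
      (measurePreserving_sub_prod (volume : Measure ℝ) volume).quasiMeasurePreserving
    exact h2
  calc ∫⁻ x, ∫⁻ y, ENNReal.ofReal (f (x - y)) * ENNReal.ofReal (g y)
      = ∫⁻ y, ∫⁻ x, ENNReal.ofReal (f (x - y)) * ENNReal.ofReal (g y) :=
        lintegral_lintegral_swap hprod
    _ = ∫⁻ y, (∫⁻ x, ENNReal.ofReal (f x)) * ENNReal.ofReal (g y) := by
        refine lintegral_congr fun y => ?_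
        have hshift : AEMeasurable (fun x => ENNReal.ofReal (f (x - y))) (volume : Measure ℝ) := by
          have h3 := haemf.comp_quasiMeasurePreserving
            (measurePreserving_sub_right (volume : Measure ℝ) y).quasiMeasurePreserving
          exact h3
        rw [lintegral_mul_const'' _ hshift,
          lintegral_sub_right_eq_self (fun u => ENNReal.ofReal (f u)) y]
    _ = (∫⁻ x, ENNReal.ofReal (f x)) * ∫⁻ y, ENNReal.ofReal (g y) :=
        lintegral_const_mul'' _ haemg
    _ ≤ ENNReal.ofReal I * ENNReal.ofReal I := by
        rw [← ofReal_integral_eq_lintegral_ofReal hfint (Filter.Eventually.of_forall hfnn),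
          ← ofReal_integral_eq_lintegral_ofReal hgint (Filter.Eventually.of_forall hgnn)]
        exact mul_le_mul' (ENNReal.ofReal_le_ofReal hfI) (ENNReal.ofReal_le_ofReal hgI)
    _ = ENNReal.ofReal (I ^ 2) := by rw [← ENNReal.ofReal_mul hI0, sq]


set_option maxHeartbeats 1000000 in
/-- If `X = X₁ + X₂` with independent `X₁, X₂` having densities of Fisher information at
most `I`, then the density `p = p₁ ⋆ p₂` of `X` satisfies: `p(x) = 0 → p''(x) = 0`,
`|p''(x)| ≤ I^{3/2}` for all `x`, and `∫_{p>0} p''²/p ≤ I²`. Here `p'' = p₁' ⋆ p₂'`. -/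
theorem convolution_two_second_deriv_bounds
    (p₁ p₂ p₁' p₂' : ℝ → ℝ) (I : ℝ)
    (hnn₁ : ∀ x, 0 ≤ p₁ x) (hint₁ : Integrable p₁) (h1₁ : ∫ x, p₁ x = 1)
    (hnn₂ : ∀ x, 0 ≤ p₂ x) (hint₂ : Integrable p₂) (h1₂ : ∫ x, p₂ x = 1)
    (hFTC₁ : ∀ a b : ℝ, p₁ b - p₁ a = ∫ x in a..b, p₁' x)
    (hFTC₂ : ∀ a b : ℝ, p₂ b - p₂ a = ∫ x in a..b, p₂' x)
    (hconv₁ : ∀ x, p₁ x = 0 → p₁' x = 0)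
    (hconv₂ : ∀ x, p₂ x = 0 → p₂' x = 0)
    (hI₁fin : IntegrableOn (fun x => (p₁' x) ^ 2 / p₁ x) {x | 0 < p₁ x})
    (hI₂fin : IntegrableOn (fun x => (p₂' x) ^ 2 / p₂ x) {x | 0 < p₂ x})
    (hI₁ : ∫ x in {x | 0 < p₁ x}, (p₁' x) ^ 2 / p₁ x ≤ I)
    (hI₂ : ∫ x in {x | 0 < p₂ x}, (p₂' x) ^ 2 / p₂ x ≤ I)
    (p p'' : ℝ → ℝ)
    (hp : ∀ x, p x = ∫ y, p₁ (x - y) * p₂ y)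
    (hp'' : ∀ x, p'' x = ∫ y, p₁' (x - y) * p₂' y) :
    (∀ x, p x = 0 → p'' x = 0) ∧
    (∀ x, |p'' x| ≤ I ^ ((3 : ℝ) / 2)) ∧
    (∫⁻ x in {x | 0 < p x}, ENNReal.ofReal ((p'' x) ^ 2 / p x) ≤ ENNReal.ofReal (I ^ 2)) := by
  classical
  obtain ⟨hq₁int, hq₁I, hqp₁, hbd₁⟩ :=
    fisher_aux p₁ p₁' I hnn₁ hint₁ h1₁ hFTC₁ hconv₁ hI₁fin hI₁
  obtain ⟨hq₂int, hq₂I, hqp₂, hbd₂⟩ :=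
    fisher_aux p₂ p₂' I hnn₂ hint₂ h1₂ hFTC₂ hconv₂ hI₂fin hI₂
  have hqnn₁ : ∀ u, 0 ≤ p₁' u ^ 2 / p₁ u := fun u => div_nonneg (sq_nonneg _) (hnn₁ u)
  have hqnn₂ : ∀ u, 0 ≤ p₂' u ^ 2 / p₂ u := fun u => div_nonneg (sq_nonneg _) (hnn₂ u)
  have hI0 : 0 ≤ I := le_trans (integral_nonneg fun u => hqnn₁ u) hq₁I
  have hsqI0 : 0 ≤ Real.sqrt I := Real.sqrt_nonneg _
  have hq₁x : ∀ x : ℝ, Integrable (fun y => p₁' (x - y) ^ 2 / p₁ (x - y)) :=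
    fun x => hq₁int.comp_sub_left x
  have hq₁xI : ∀ x : ℝ, ∫ y, p₁' (x - y) ^ 2 / p₁ (x - y) ≤ I := by
    intro x
    rw [integral_sub_left_eq_self (fun u => p₁' u ^ 2 / p₁ u) volume x]
    exact hq₁I
  have hmq₁x : ∀ x : ℝ, AEStronglyMeasurable (fun y => p₁' (x - y) ^ 2 / p₁ (x - y)) volume :=
    fun x => (hq₁x x).aestronglyMeasurable
  have hmp₁x : ∀ x : ℝ, AEStronglyMeasurable (fun y => p₁ (x - y)) volume :=
    fun x => (hint₁.comp_sub_left x).aestronglyMeasurable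
  -- the square factorization
  have hsqid : ∀ z w : ℝ, (p₁' z * p₂' w) ^ 2 =
      (p₁' z ^ 2 / p₁ z) * p₁ z * ((p₂' w ^ 2 / p₂ w) * p₂ w) := by
    intro z w
    rw [hqp₁ z, hqp₂ w]; ring
  -- integrability of the convolution integrand of p
  have hv2int : ∀ x : ℝ, Integrable (fun y => p₁ (x - y) * p₂ y) := by
    intro x
    refine Integrable.mono' (hint₂.const_mul (Real.sqrt I))
      ((hmp₁x x).mul hint₂.aestronglyMeasurable) (Filter.Eventually.of_forall fun y => ?_)
    rw [Real.norm_eq_abs, abs_of_nonneg (mul_nonneg (hnn₁ _) (hnn₂ _))]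
    exact mul_le_mul_of_nonneg_right (hbd₁ _) (hnn₂ y)
  have hpnn : ∀ x, 0 ≤ p x := fun x =>
    (hp x) ▸ integral_nonneg fun y => mul_nonneg (hnn₁ _) (hnn₂ _)
  -- claim 1
  have claim1 : ∀ x, p x = 0 → p'' x = 0 := by
    intro x hx
    by_cases hf : Integrable (fun y => p₁' (x - y) * p₂' y)
    · have h0 : (fun y => p₁ (x - y) * p₂ y) =ᵐ[volume] 0 := by
        rw [← integral_eq_zero_iff_of_nonneg (fun y => mul_nonneg (hnn₁ _) (hnn₂ _)) (hv2int x),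
          ← hp x]
        exact hx
      rw [hp'', integral_congr_ae (g := fun _ => (0 : ℝ)) ?_, integral_zero]
      filter_upwards [h0] with y hy
      rcases mul_eq_zero.1 hy with h | h
      · rw [hconv₁ _ h, zero_mul]
      · rw [hconv₂ _ h, mul_zero]
    · rw [hp'', integral_undef hf]
  -- claim 2
  have hIrw : Real.sqrt I * I = I ^ ((3 : ℝ) / 2) := by
    have h32 : I ^ ((3 : ℝ) / 2) = I ^ ((1 : ℝ) / 2) * I ^ (1 : ℝ) := by
      rw [← Real.rpow_add' hI0 (by norm_num)]
      norm_num
    rw [h32, Real.rpow_one, ← Real.sqrt_eq_rpow]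
  have claim2 : ∀ x, |p'' x| ≤ I ^ ((3 : ℝ) / 2) := by
    intro x
    have hcint : Integrable (fun y => (p₁' (x - y) ^ 2 / p₁ (x - y)) * p₂ y) := by
      refine Integrable.mono' ((hq₁x x).mul_const (Real.sqrt I))
        ((hmq₁x x).mul hint₂.aestronglyMeasurable) (Filter.Eventually.of_forall fun y => ?_)
      rw [Real.norm_eq_abs, abs_of_nonneg (mul_nonneg (hqnn₁ _) (hnn₂ _))]
      exact mul_le_mul_of_nonneg_left (hbd₂ y) (hqnn₁ _)
    have hdint : Integrable (fun y => p₁ (x - y) * (p₂' y ^ 2 / p₂ y)) := by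
      refine Integrable.mono' (hq₂int.const_mul (Real.sqrt I))
        ((hmp₁x x).mul hq₂int.aestronglyMeasurable) (Filter.Eventually.of_forall fun y => ?_)
      rw [Real.norm_eq_abs, abs_of_nonneg (mul_nonneg (hnn₁ _) (hqnn₂ _))]
      exact mul_le_mul_of_nonneg_right (hbd₁ _) (hqnn₂ y)
    have hcI : ∫ y, (p₁' (x - y) ^ 2 / p₁ (x - y)) * p₂ y ≤ Real.sqrt I * I := by
      calc ∫ y, (p₁' (x - y) ^ 2 / p₁ (x - y)) * p₂ y
          ≤ ∫ y, (p₁' (x - y) ^ 2 / p₁ (x - y)) * Real.sqrt I :=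
            integral_mono hcint ((hq₁x x).mul_const _)
              (fun y => mul_le_mul_of_nonneg_left (hbd₂ y) (hqnn₁ _))
        _ = (∫ y, p₁' (x - y) ^ 2 / p₁ (x - y)) * Real.sqrt I := integral_mul_const _ _
        _ ≤ I * Real.sqrt I := mul_le_mul_of_nonneg_right (hq₁xI x) hsqI0
        _ = Real.sqrt I * I := mul_comm _ _
    have hdI : ∫ y, p₁ (x - y) * (p₂' y ^ 2 / p₂ y) ≤ Real.sqrt I * I := by
      calc ∫ y, p₁ (x - y) * (p₂' y ^ 2 / p₂ y)
          ≤ ∫ y, Real.sqrt I * (p₂' y ^ 2 / p₂ y) :=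
            integral_mono hdint (hq₂int.const_mul _)
              (fun y => mul_le_mul_of_nonneg_right (hbd₁ _) (hqnn₂ y))
        _ = Real.sqrt I * ∫ y, p₂' y ^ 2 / p₂ y := integral_const_mul _ _
        _ ≤ Real.sqrt I * I := mul_le_mul_of_nonneg_left hq₂I hsqI0
    have habs := abs_conv_le (fun y => p₁' (x - y) * p₂' y)
      (fun y => (p₁' (x - y) ^ 2 / p₁ (x - y)) * p₂ y)
      (fun y => p₁ (x - y) * (p₂' y ^ 2 / p₂ y))
      (fun y => mul_nonneg (hqnn₁ _) (hnn₂ _)) (fun y => mul_nonneg (hnn₁ _) (hqnn₂ _))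
      (fun y => by rw [hsqid (x - y) y]; ring) hcint hdint
    rw [hp'']
    calc |∫ y, p₁' (x - y) * p₂' y|
        ≤ Real.sqrt (∫ y, (p₁' (x - y) ^ 2 / p₁ (x - y)) * p₂ y) *
          Real.sqrt (∫ y, p₁ (x - y) * (p₂' y ^ 2 / p₂ y)) := habs
      _ ≤ Real.sqrt (Real.sqrt I * I) * Real.sqrt (Real.sqrt I * I) :=
          mul_le_mul (Real.sqrt_le_sqrt hcI) (Real.sqrt_le_sqrt hdI) (Real.sqrt_nonneg _)
            (Real.sqrt_nonneg _)
      _ = Real.sqrt I * I := Real.mul_self_sqrt (mul_nonneg hsqI0 hI0)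
      _ = I ^ ((3 : ℝ) / 2) := hIrw
  refine ⟨claim1, claim2, ?_⟩
  -- pointwise key bound
  have key : ∀ x, ENNReal.ofReal (p'' x ^ 2 / p x) ≤
      ∫⁻ y, ENNReal.ofReal (p₁' (x - y) ^ 2 / p₁ (x - y)) * ENNReal.ofReal (p₂' y ^ 2 / p₂ y) := by
    intro x
    rcases (hpnn x).eq_or_lt with hpx | hpx
    · rw [claim1 x hpx.symm]
      simp
    by_cases hw : Integrable (fun y => (p₁' (x - y) ^ 2 / p₁ (x - y)) * (p₂' y ^ 2 / p₂ y))
    swap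
    · have haesm : AEStronglyMeasurable
          (fun y => (p₁' (x - y) ^ 2 / p₁ (x - y)) * (p₂' y ^ 2 / p₂ y)) volume :=
        (hmq₁x x).mul hq₂int.aestronglyMeasurable
      have hrhs : (∫⁻ y, ENNReal.ofReal (p₁' (x - y) ^ 2 / p₁ (x - y)) *
          ENNReal.ofReal (p₂' y ^ 2 / p₂ y)) = ⊤ := by
        have heq : ∀ y, ENNReal.ofReal (p₁' (x - y) ^ 2 / p₁ (x - y)) *
            ENNReal.ofReal (p₂' y ^ 2 / p₂ y) =
            ‖(p₁' (x - y) ^ 2 / p₁ (x - y)) * (p₂' y ^ 2 / p₂ y)‖ₑ := by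
          intro y
          rw [← ENNReal.ofReal_mul (hqnn₁ _),
            ← Real.enorm_eq_ofReal (mul_nonneg (hqnn₁ _) (hqnn₂ _))]
        rw [lintegral_congr heq]
        by_contra hne
        exact hw ⟨haesm, lt_top_iff_ne_top.2 hne⟩
      rw [hrhs]; exact le_top
    · -- main case : Cauchy-Schwarz
      have hWnn : 0 ≤ ∫ y, (p₁' (x - y) ^ 2 / p₁ (x - y)) * (p₂' y ^ 2 / p₂ y) :=
        integral_nonneg fun y => mul_nonneg (hqnn₁ _) (hqnn₂ _)
      have habs : |p'' x| ≤
          Real.sqrt (∫ y, (p₁' (x - y) ^ 2 / p₁ (x - y)) * (p₂' y ^ 2 / p₂ y)) *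
          Real.sqrt (p x) := by
        rw [hp'']
        have h := abs_conv_le (fun y => p₁' (x - y) * p₂' y)
          (fun y => (p₁' (x - y) ^ 2 / p₁ (x - y)) * (p₂' y ^ 2 / p₂ y))
          (fun y => p₁ (x - y) * p₂ y)
          (fun y => mul_nonneg (hqnn₁ _) (hqnn₂ _)) (fun y => mul_nonneg (hnn₁ _) (hnn₂ _))
          (fun y => by rw [hsqid (x - y) y]; ring) hw (hv2int x)
        rw [← hp x] at h
        exact h
      have hsq : p'' x ^ 2 ≤ (∫ y, (p₁' (x - y) ^ 2 / p₁ (x - y)) * (p₂' y ^ 2 / p₂ y)) * p x := by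
        calc p'' x ^ 2 = |p'' x| ^ 2 := (sq_abs _).symm
          _ ≤ (Real.sqrt (∫ y, (p₁' (x - y) ^ 2 / p₁ (x - y)) * (p₂' y ^ 2 / p₂ y)) *
              Real.sqrt (p x)) ^ 2 := pow_le_pow_left₀ (abs_nonneg _) habs 2
          _ = (∫ y, (p₁' (x - y) ^ 2 / p₁ (x - y)) * (p₂' y ^ 2 / p₂ y)) * p x := by
              rw [mul_pow, Real.sq_sqrt hWnn, Real.sq_sqrt (hpnn x)]
      have hdiv : p'' x ^ 2 / p x ≤ ∫ y, (p₁' (x - y) ^ 2 / p₁ (x - y)) * (p₂' y ^ 2 / p₂ y) := by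
        rw [div_le_iff₀ hpx]
        exact hsq
      calc ENNReal.ofReal (p'' x ^ 2 / p x)
          ≤ ENNReal.ofReal (∫ y, (p₁' (x - y) ^ 2 / p₁ (x - y)) * (p₂' y ^ 2 / p₂ y)) :=
            ENNReal.ofReal_le_ofReal hdiv
        _ = ∫⁻ y, ENNReal.ofReal ((p₁' (x - y) ^ 2 / p₁ (x - y)) * (p₂' y ^ 2 / p₂ y)) :=
            ofReal_integral_eq_lintegral_ofReal hw
              (Filter.Eventually.of_forall fun y => mul_nonneg (hqnn₁ _) (hqnn₂ _))
        _ = ∫⁻ y, ENNReal.ofReal (p₁' (x - y) ^ 2 / p₁ (x - y)) *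
              ENNReal.ofReal (p₂' y ^ 2 / p₂ y) := by
            refine lintegral_congr fun y => ?_
            rw [ENNReal.ofReal_mul (hqnn₁ _)]
  calc ∫⁻ x in {x | 0 < p x}, ENNReal.ofReal (p'' x ^ 2 / p x)
      ≤ ∫⁻ x, ENNReal.ofReal (p'' x ^ 2 / p x) :=
        lintegral_mono' Measure.restrict_le_self le_rfl
    _ ≤ ∫⁻ x, ∫⁻ y, ENNReal.ofReal (p₁' (x - y) ^ 2 / p₁ (x - y)) *
          ENNReal.ofReal (p₂' y ^ 2 / p₂ y) := lintegral_mono key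
    _ ≤ ENNReal.ofReal (I ^ 2) :=
        lintegral_conv_le (fun u => p₁' u ^ 2 / p₁ u) (fun u => p₂' u ^ 2 / p₂ u) I hI0
          hqnn₁ hqnn₂ hq₁int hq₂int hq₁I hq₂I
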